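/- arXiv:2404.19044 — 5 statements merged into one kernel-verified Lean document; each statement's English description precedes it below -/
import Mathlib

section
/- Let X ⊂ ℂ^m be an unbounded pure k-dimensional complex algebraic set, and let W ⊂ ℂ^m be an (m−k)-dimensional complex vector subspace with W ∩ C_{3,∞}(X) = {0}. Writing ℂ^m = V × W with V the orthogonal complement of W, there exist positive constants C and R such that X ⊂ {(x,y) ∈ V × W : ‖y‖ < C‖x‖} ∪ B_R, where B_R is the open ball of radius R centered at the origin of ℂ^m. -/
open Filter Topology Metric

noncomputable section

/-- `ℂ^m` with its Euclidean (Hermitian) structure. -/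
abbrev Em (m : ℕ) := EuclideanSpace ℂ (Fin m)

/-- Evaluation of a multivariate polynomial at a point of `ℂ^m`. -/
def pev {m : ℕ} (f : MvPolynomial (Fin m) ℂ) (x : Em m) : ℂ :=
  MvPolynomial.eval (fun i => x i) f

/-- A (complex, affine) algebraic subset of `ℂ^m`: the common zero locus of a
family of complex polynomials. -/
def IsAlgSet {m : ℕ} (X : Set (Em m)) : Prop :=
  ∃ S : Set (MvPolynomial (Fin m) ℂ), X = {x | ∀ f ∈ S, pev f x = 0}

/-- An irreducible algebraic subset of `ℂ^m`. -/
def IsIrredAlgSet {m : ℕ} (Z : Set (Em m)) : Prop :=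
  IsAlgSet Z ∧ Z.Nonempty ∧
    ∀ Y₁ Y₂ : Set (Em m), IsAlgSet Y₁ → IsAlgSet Y₂ → Z ⊆ Y₁ ∪ Y₂ → Z ⊆ Y₁ ∨ Z ⊆ Y₂

/-- An irreducible component of `X`: a maximal irreducible algebraic subset of `X`. -/
def IsIrredComponent {m : ℕ} (X Z : Set (Em m)) : Prop :=
  IsIrredAlgSet Z ∧ Z ⊆ X ∧ ∀ Z', IsIrredAlgSet Z' → Z' ⊆ X → Z ⊆ Z' → Z = Z'

/-- The (complex) dimension of an algebraic subset of `ℂ^m`, as the Krull dimension of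
the poset of irreducible algebraic subsets contained in it (for complex algebraic
sets this coincides with the complex dimension). -/
def algDim {m : ℕ} (X : Set (Em m)) : WithBot ℕ∞ :=
  Order.krullDim {Z : Set (Em m) // IsIrredAlgSet Z ∧ Z ⊆ X}

/-- `X` is of pure dimension `k`: every irreducible component has dimension `k`. -/
def IsPureDim {m : ℕ} (X : Set (Em m)) (k : ℕ) : Prop :=
  X.Nonempty ∧ ∀ Z, IsIrredComponent X Z → algDim Z = (k : WithBot ℕ∞)

/-- The Zariski tangent space of `X` at `p`: the joint kernel of the differentials at `p`
of all polynomials vanishing identically on `X`.  At a smooth point of `X` this is the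
usual tangent space `T_p X`. -/
def zTangent {m : ℕ} (X : Set (Em m)) (p : Em m) : Submodule ℂ (Em m) :=
  ⨅ f ∈ {f : MvPolynomial (Fin m) ℂ | ∀ x ∈ X, pev f x = 0},
    LinearMap.ker (fderiv ℂ (pev f) p : Em m →ₗ[ℂ] ℂ)

/-- The singular locus of a pure `k`-dimensional algebraic set `X`: the points of `X`
where the Zariski tangent space does not have dimension `k`. -/
def singLocus {m : ℕ} (X : Set (Em m)) (k : ℕ) : Set (Em m) :=
  {p ∈ X | Module.finrank ℂ (zTangent X p) ≠ k}

/-- The Whitney tangent cone at infinity `C_{3,∞}(X)`. -/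
def C3Inf {m : ℕ} (X : Set (Em m)) : Set (Em m) :=
  {v | ∃ (p : ℕ → Em m) (t : ℕ → ℂ), (∀ j, p j ∈ X) ∧
    Tendsto (fun j => ‖p j‖) atTop atTop ∧ Tendsto (fun j => t j • p j) atTop (𝓝 v)}

/-- The Whitney tangent cone at infinity `C_{4,∞}(X)` (for `X` pure `k`-dimensional). -/
def C4Inf {m : ℕ} (X : Set (Em m)) (k : ℕ) : Set (Em m) :=
  {v | ∃ (p w : ℕ → Em m), (∀ j, p j ∈ X \ singLocus X k) ∧
    (∀ j, w j ∈ zTangent X (p j)) ∧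
    Tendsto (fun j => ‖p j‖) atTop atTop ∧ Tendsto w atTop (𝓝 v)}

/-- The Whitney tangent cone at infinity `C_{5,∞}(X)`. -/
def C5Inf {m : ℕ} (X : Set (Em m)) : Set (Em m) :=
  {v | ∃ (p q : ℕ → Em m) (t : ℕ → ℂ), (∀ j, p j ∈ X) ∧ (∀ j, q j ∈ X) ∧
    Tendsto (fun j => ‖p j‖) atTop atTop ∧ Tendsto (fun j => ‖q j‖) atTop atTop ∧
    Tendsto (fun j => t j • (p j - q j)) atTop (𝓝 v)}


/-- Let `X ⊆ ℂ^m` be an unbounded pure `k`-dimensional complex algebraic set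
and `W` an `(m-k)`-dimensional complex subspace with `W ∩ C_{3,∞}(X) = {0}`.  Writing each
`z ∈ ℂ^m` as `z = x + y` with `x ∈ V = Wᗮ` (the orthogonal projection of `z` to `Wᗮ`) and
`y ∈ W`, there are constants `C, R > 0` with
`X ⊆ {(x, y) : ‖y‖ < C ‖x‖} ∪ B_R`. -/
theorem X_subset_cone_union_ball {m k : ℕ} (X : Set (Em m))
    (hX : IsAlgSet X) (hpure : IsPureDim X k) (hub : ¬ Bornology.IsBounded X)
    (W : Submodule ℂ (Em m)) (hW : Module.finrank ℂ W = m - k)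
    (htrans : (W : Set (Em m)) ∩ C3Inf X = {0}) :
    ∃ C R : ℝ, 0 < C ∧ 0 < R ∧
      X ⊆ {z : Em m | ‖z - (Submodule.orthogonalProjectionOnto Wᗮ z : Em m)‖ <
              C * ‖(Submodule.orthogonalProjectionOnto Wᗮ z : Em m)‖} ∪ Metric.ball 0 R := by
  by_contra h
  push_neg at h
  set P : Em m →L[ℂ] Em m := Wᗮ.subtypeL.comp (Submodule.orthogonalProjectionOnto Wᗮ) with hP
  have hPz : ∀ z : Em m, P z = (Submodule.orthogonalProjectionOnto Wᗮ z : Em m) := fun z => rfl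
  -- extract bad points
  have hzex : ∀ n : ℕ, ∃ z ∈ X,
      ((n : ℝ) + 1) * ‖P z‖ ≤ ‖z - P z‖ ∧ ((n : ℝ) + 1) ≤ ‖z‖ := by
    intro n
    obtain ⟨z, hzX, hz⟩ := Set.not_subset.mp
      (h ((n : ℝ) + 1) ((n : ℝ) + 1) (by positivity) (by positivity))
    simp only [Set.mem_union, not_or, Set.mem_setOf_eq, Metric.mem_ball, not_lt,
      dist_zero_right] at hz
    exact ⟨z, hzX, hz.1, hz.2⟩
  choose z hzX hzineq hznorm using hzex
  have hzpos : ∀ n, (0 : ℝ) < ‖z n‖ := fun n =>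
    lt_of_lt_of_le (by positivity) (hznorm n)
  -- the key orthogonality inequality ‖z - P z‖ ≤ ‖z‖
  have hyle : ∀ w : Em m, ‖w - P w‖ ≤ ‖w‖ := by
    intro w
    have hiz : inner ℂ (P w) (w - P w) = 0 := by
      refine Submodule.inner_right_of_mem_orthogonal (K := Wᗮ)
        (Submodule.orthogonalProjectionOnto Wᗮ w).2 ?_
      exact Submodule.sub_starProjection_mem_orthogonal (K := Wᗮ) w
    have := norm_add_sq_eq_norm_sq_add_norm_sq_of_inner_eq_zero _ _ hiz
    rw [add_sub_cancel] at this
    nlinarith [norm_nonneg (P w), norm_nonneg (w - P w), norm_nonneg w]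
  -- normalized sequence on the unit sphere
  set u : ℕ → Em m := fun n => ((‖z n‖ : ℂ))⁻¹ • z n with hu
  have hunorm : ∀ n, ‖u n‖ = 1 := by
    intro n
    rw [hu]
    simp only [norm_smul, norm_inv, Complex.norm_real, Real.norm_eq_abs,
      abs_of_pos (hzpos n)]
    exact inv_mul_cancel₀ (hzpos n).ne'
  have husphere : ∀ n, u n ∈ Metric.sphere (0 : Em m) 1 := fun n =>
    mem_sphere_zero_iff_norm.mpr (hunorm n)
  obtain ⟨v, hvsp, φ, hφ, hvt⟩ :=
    (isCompact_sphere (0 : Em m) 1).tendsto_subseq husphere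
  have hvnorm : ‖v‖ = 1 := mem_sphere_zero_iff_norm.mp hvsp
  -- norms go to infinity along the subsequence
  have hnormsT : Tendsto (fun j => ‖z (φ j)‖) atTop atTop := by
    refine tendsto_atTop_mono (fun j => ?_) tendsto_natCast_atTop_atTop
    calc (j : ℝ) ≤ (φ j : ℝ) := by exact_mod_cast hφ.le_apply
    _ ≤ (φ j : ℝ) + 1 := by linarith
    _ ≤ ‖z (φ j)‖ := hznorm (φ j)
  -- v is in the tangent cone at infinity
  have hvC3 : v ∈ C3Inf X := by
    refine ⟨fun j => z (φ j), fun j => ((‖z (φ j)‖ : ℂ))⁻¹, fun j => hzX (φ j),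
      hnormsT, ?_⟩
    exact hvt
  -- projection of v vanishes
  have hPu : ∀ n, ‖P (u n)‖ ≤ ((n : ℝ) + 1)⁻¹ := by
    intro n
    have h1 : P (u n) = ((‖z n‖ : ℂ))⁻¹ • P (z n) := by rw [hu]; simp
    have h2 : ‖P (u n)‖ = ‖z n‖⁻¹ * ‖P (z n)‖ := by
      rw [h1, norm_smul]
      simp [abs_of_pos (hzpos n)]
    rw [h2]
    have hn1 : (0 : ℝ) < (n : ℝ) + 1 := by positivity
    have h3 : ‖P (z n)‖ ≤ ‖z n‖ / ((n : ℝ) + 1) := by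
      rw [le_div_iff₀ hn1, mul_comm]
      exact (hzineq n).trans (hyle (z n))
    calc ‖z n‖⁻¹ * ‖P (z n)‖ ≤ ‖z n‖⁻¹ * (‖z n‖ / ((n : ℝ) + 1)) :=
        mul_le_mul_of_nonneg_left h3 (by positivity)
      _ = ((n : ℝ) + 1)⁻¹ := by
        rw [div_eq_mul_inv, ← mul_assoc, inv_mul_cancel₀ (hzpos n).ne', one_mul]
  have hPv0 : P v = 0 := by
    have hlim1 : Tendsto (fun j => P (u (φ j))) atTop (𝓝 (P v)) :=
      (P.continuous.tendsto v).comp hvt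
    have hlim2 : Tendsto (fun j => P (u (φ j))) atTop (𝓝 0) := by
      rw [tendsto_zero_iff_norm_tendsto_zero]
      refine squeeze_zero (fun j => norm_nonneg _)
        (fun j => (hPu (φ j)).trans ?_) tendsto_one_div_add_atTop_nhds_zero_nat
      · rw [one_div]
        apply inv_anti₀ (by positivity)
        have : (j : ℝ) ≤ (φ j : ℝ) := by exact_mod_cast hφ.le_apply
        linarith
    exact tendsto_nhds_unique hlim1 hlim2
  -- hence v ∈ W
  have hvW : v ∈ W := by
    have h1 : v - P v ∈ Wᗮᗮ := Submodule.sub_starProjection_mem_orthogonal (K := Wᗮ) v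
    rw [hPv0, sub_zero, Submodule.orthogonal_orthogonal] at h1
    exact h1
  have : v ∈ ((W : Set (Em m)) ∩ C3Inf X) := ⟨hvW, hvC3⟩
  rw [htrans] at this
  simp only [Set.mem_singleton_iff] at this
  rw [this, norm_zero] at hvnorm
  exact one_ne_zero hvnorm.symm

end
end

section
/- Let X ⊂ ℂ^m be an unbounded pure k-dimensional complex algebraic set, and let W ⊂ ℂ^m be an (m−k)-dimensional complex vector subspace with W ∩ C_{3,∞}(X) = {0}. Writing ℂ^m = V × W with V the orthogonal complement of W, and letting π : ℂ^m → V be the orthogonal projection π(x,y) = x, the restriction π : X → V is a proper map (preimages of compact sets are compact). -/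
open Filter Topology Metric

noncomputable section

/-- Let `X ⊆ ℂ^m` be an unbounded pure `k`-dimensional complex algebraic set
and `W` an `(m-k)`-dimensional complex subspace with `W ∩ C_{3,∞}(X) = {0}`, and let
`π : ℂ^m → V = Wᗮ` be the orthogonal projection.  Then `π : X → V` is a proper map:
preimages of compact sets are compact. -/
theorem proj_restriction_proper {m k : ℕ} (X : Set (Em m))
    (hX : IsAlgSet X) (hpure : IsPureDim X k) (hub : ¬ Bornology.IsBounded X)
    (W : Submodule ℂ (Em m)) (hW : Module.finrank ℂ W = m - k)
    (htrans : (W : Set (Em m)) ∩ C3Inf X = {0}) :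
    ∀ K : Set Wᗮ, IsCompact K →
      IsCompact {p ∈ X | Wᗮ.orthogonalProjectionOnto p ∈ K} := by
  intro K hK
  -- X is closed
  have hXclosed : IsClosed X := by
    obtain ⟨S, rfl⟩ := hX
    have h : {x : Em m | ∀ f ∈ S, pev f x = 0} = ⋂ f ∈ S, {x | pev f x = 0} := by
      ext x; simp
    rw [h]
    refine isClosed_biInter fun f _ => ?_
    have hc : Continuous (pev f) := by
      have h2 : Continuous fun c : Fin m → ℂ => MvPolynomial.eval c f :=
        MvPolynomial.continuous_eval f
      exact h2.comp (continuous_pi fun i => PiLp.continuous_apply 2 _ i)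
    exact isClosed_eq hc continuous_const
  set A := {p ∈ X | Wᗮ.orthogonalProjectionOnto p ∈ K} with hA
  have hAclosed : IsClosed A := by
    have h : A = X ∩ (fun p => Wᗮ.orthogonalProjectionOnto p) ⁻¹' K := by
      ext p; simp [hA, Set.mem_setOf_eq]
    rw [h]
    exact hXclosed.inter (hK.isClosed.preimage (Wᗮ.orthogonalProjectionOnto).continuous)
  have hAbd : Bornology.IsBounded A := by
    by_contra hAb
    have hseq : ∀ j : ℕ, ∃ p ∈ A, (j : ℝ) + 1 < ‖p‖ := by
      intro j
      by_contra h
      push_neg at h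
      exact hAb (isBounded_iff_forall_norm_le.2 ⟨(j : ℝ) + 1, h⟩)
    choose p hpA hpn using hseq
    have hpos : ∀ j, (0 : ℝ) < ‖p j‖ := fun j =>
      lt_of_le_of_lt (by positivity) (hpn j)
    set u : ℕ → Em m := fun j => ((‖p j‖ : ℂ))⁻¹ • p j with hu
    have hnormu : ∀ j, ‖u j‖ = 1 := by
      intro j
      rw [hu]
      simp only [norm_smul, norm_inv, Complex.norm_real, Real.norm_eq_abs,
        abs_of_pos (hpos j)]
      exact inv_mul_cancel₀ (hpos j).ne'
    have husphere : ∀ j, u j ∈ Metric.sphere (0 : Em m) 1 := by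
      intro j; simpa [Metric.mem_sphere, dist_eq_norm] using hnormu j
    obtain ⟨v, hv, φ, hφ, hconv⟩ :=
      (isCompact_sphere (0 : Em m) 1).tendsto_subseq husphere
    have hvnorm : ‖v‖ = 1 := by
      simpa [Metric.mem_sphere, dist_eq_norm] using hv
    have hptop : Tendsto (fun j => ‖p (φ j)‖) atTop atTop := by
      refine tendsto_atTop_mono (fun j => ?_) tendsto_natCast_atTop_atTop
      have h1 : (φ j : ℝ) + 1 ≤ ‖p (φ j)‖ := (hpn (φ j)).le
      have h2 : (j : ℝ) ≤ (φ j : ℝ) := by exact_mod_cast hφ.le_apply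
      linarith
    have hvC3 : v ∈ C3Inf X := by
      refine ⟨fun j => p (φ j), fun j => ((‖p (φ j)‖ : ℂ))⁻¹,
        fun j => (hpA (φ j)).1, hptop, hconv⟩
    obtain ⟨C, hC⟩ := hK.isBounded.exists_norm_le
    have hprojlim : Tendsto (fun j => Wᗮ.orthogonalProjectionOnto (u (φ j))) atTop
        (𝓝 (Wᗮ.orthogonalProjectionOnto v)) :=
      ((Wᗮ.orthogonalProjectionOnto).continuous.tendsto v).comp hconv
    have hprojzero : Tendsto (fun j => Wᗮ.orthogonalProjectionOnto (u (φ j))) atTop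
        (𝓝 0) := by
      rw [tendsto_zero_iff_norm_tendsto_zero]
      have hbound : ∀ j, ‖Wᗮ.orthogonalProjectionOnto (u (φ j))‖ ≤ (‖p (φ j)‖)⁻¹ * C := by
        intro j
        have h : Wᗮ.orthogonalProjectionOnto (u (φ j)) =
            ((‖p (φ j)‖ : ℂ))⁻¹ • Wᗮ.orthogonalProjectionOnto (p (φ j)) := by
          rw [hu]; simp
        rw [h, norm_smul]
        simp only [norm_inv, Complex.norm_real, Real.norm_eq_abs,
          abs_of_pos (hpos (φ j))]
        exact mul_le_mul_of_nonneg_left (hC _ (hpA (φ j)).2)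
          (inv_nonneg.2 (hpos (φ j)).le)
      have hzero : Tendsto (fun j => (‖p (φ j)‖)⁻¹ * C) atTop (𝓝 0) := by
        have h := (hptop.inv_tendsto_atTop).mul_const C
        simpa using h
      exact squeeze_zero (fun j => norm_nonneg _) hbound hzero
    have hproj0 : Wᗮ.orthogonalProjectionOnto v = 0 :=
      tendsto_nhds_unique hprojlim hprojzero
    have hvW : v ∈ W := by
      have h : v ∈ Wᗮᗮ := by
        rw [← Submodule.orthogonalProjectionOnto_eq_zero_iff]
        exact hproj0
      rwa [Submodule.orthogonal_orthogonal] at h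
    have hmem : v ∈ (W : Set (Em m)) ∩ C3Inf X := ⟨hvW, hvC3⟩
    rw [htrans] at hmem
    simp only [Set.mem_singleton_iff] at hmem
    rw [hmem] at hvnorm
    simp at hvnorm
  exact Metric.isCompact_of_isClosed_isBounded hAclosed hAbd

end
end

section
/- Let X ⊂ ℂ^m be an unbounded pure k-dimensional complex algebraic set such that C_{5,∞}(X) is a pure k-dimensional algebraic set, let Ω be an algebraic region of type (k,m) containing X and C_{5,∞}(X), with associated orthogonal decomposition ℂ^m = V₁ ⊕ V₂, and let π_Ω : ℂ^m → V₁ be the orthogonal projection. Then the restrictions π_Ω : X → V₁ and π_Ω : C_{5,∞}(X) → V₁ are proper maps, and ker π_Ω ∩ C_{5,∞}(X) = {0}. -/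
open Filter Topology Metric

noncomputable section

lemma continuous_pev {m : ℕ} (f : MvPolynomial (Fin m) ℂ) : Continuous (pev f) := by
  have h1 : Continuous fun x : Em m => (fun i => x i : Fin m → ℂ) :=
    continuous_pi fun i => (EuclideanSpace.proj i : Em m →L[ℂ] ℂ).continuous
  exact (MvPolynomial.continuous_eval (p := f)).comp h1

lemma isAlgSet_isClosed {m : ℕ} {X : Set (Em m)} (h : IsAlgSet X) : IsClosed X := by
  obtain ⟨S, rfl⟩ := h
  have : {x : Em m | ∀ f ∈ S, pev f x = 0} = ⋂ f ∈ S, {x | pev f x = 0} := by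
    ext x; simp [Set.mem_iInter]
  rw [this]
  exact isClosed_biInter fun f _ => isClosed_eq (continuous_pev f) continuous_const

lemma C5Inf_smul_mem {m : ℕ} {X : Set (Em m)} {v : Em m} (hv : v ∈ C5Inf X) (c : ℂ) :
    c • v ∈ C5Inf X := by
  obtain ⟨p, q, t, hp, hq, hpn, hqn, hlim⟩ := hv
  refine ⟨p, q, fun j => c * t j, hp, hq, hpn, hqn, ?_⟩
  have := hlim.const_smul c
  simpa [mul_smul] using this

lemma zero_mem_C5Inf {m : ℕ} {X : Set (Em m)} (hub : ¬ Bornology.IsBounded X) :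
    0 ∈ C5Inf X := by
  have h : ∀ j : ℕ, ∃ x ∈ X, (j : ℝ) < ‖x‖ := by
    intro j
    by_contra hc
    push_neg at hc
    exact hub (isBounded_iff_forall_norm_le.2 ⟨j, hc⟩)
  choose p hpX hpn using h
  have hten : Tendsto (fun j => ‖p j‖) atTop atTop :=
    tendsto_atTop_mono (fun j => (hpn j).le) tendsto_natCast_atTop_atTop
  exact ⟨p, p, fun _ => 0, hpX, hpX, hten, hten, by simpa using tendsto_const_nhds (x := (0 : Em m))⟩

lemma proper_aux {m : ℕ} (V₁ : Submodule ℂ (Em m)) (A B : ℝ) (hA : 0 < A) (hB : 0 < B)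
    (S : Set (Em m)) (hS : IsClosed S)
    (hSΩ : S ⊆ {z : Em m | ∃ z' ∈ V₁, ∃ z'' ∈ V₁ᗮ,
      z = z' + z'' ∧ ‖z''‖ ≤ A * (1 + ‖z'‖) ^ B})
    (K : Set V₁) (hK : IsCompact K) :
    IsCompact {p ∈ S | V₁.orthogonalProjectionOnto p ∈ K} := by
  have hcl : IsClosed {p ∈ S | V₁.orthogonalProjectionOnto p ∈ K} := by
    have heq : {p ∈ S | V₁.orthogonalProjectionOnto p ∈ K}
        = S ∩ V₁.orthogonalProjectionOnto ⁻¹' K := rfl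
    rw [heq]
    exact hS.inter (hK.isClosed.preimage V₁.orthogonalProjectionOnto.continuous)
  obtain ⟨R₀, hR₀⟩ := isBounded_iff_forall_norm_le.1 hK.isBounded
  set R : ℝ := max R₀ 0 with hRdef
  have hR0 : 0 ≤ R := le_max_right _ _
  have hR : ∀ x ∈ K, ‖x‖ ≤ R := fun x hx => (hR₀ x hx).trans (le_max_left _ _)
  refine Metric.isCompact_of_isClosed_isBounded hcl ?_
  rw [isBounded_iff_forall_norm_le]
  refine ⟨R + A * (1 + R) ^ B, ?_⟩
  rintro z ⟨hzS, hzK⟩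
  obtain ⟨z', hz', z'', hz'', hzeq, hle⟩ := hSΩ hzS
  have hproj : V₁.orthogonalProjectionOnto z = (⟨z', hz'⟩ : V₁) := by
    rw [hzeq, map_add, Submodule.orthogonalProjectionOnto_mem_subspace_eq_self (K := V₁) ⟨z', hz'⟩,
      Submodule.orthogonalProjectionOnto_apply_of_mem_orthogonal hz'', add_zero]
  have hz'R : ‖z'‖ ≤ R := by
    have := hR _ hzK
    rw [hproj] at this
    simpa using this
  have hpow : (1 + ‖z'‖) ^ B ≤ (1 + R) ^ B :=
    Real.rpow_le_rpow (by positivity) (by linarith) hB.le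
  calc ‖z‖ ≤ ‖z'‖ + ‖z''‖ := by rw [hzeq]; exact norm_add_le _ _
    _ ≤ R + A * (1 + R) ^ B := by
        have := hle.trans (by nlinarith : A * (1 + ‖z'‖) ^ B ≤ A * (1 + R) ^ B)
        linarith

/-- Let `X ⊆ ℂ^m` be an unbounded pure `k`-dimensional complex algebraic set
with `C_{5,∞}(X)` a pure `k`-dimensional algebraic set, and let
`Ω = {z = z' + z'' : z' ∈ V₁, z'' ∈ V₁ᗮ, ‖z''‖ ≤ A (1 + ‖z'‖)^B}` be an algebraic region of
type `(k, m)` (with orthogonal decomposition `ℂ^m = V₁ ⊕ V₁ᗮ`) containing `X` and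
`C_{5,∞}(X)`, and let `π_Ω` be the orthogonal projection onto `V₁`.  Then the restrictions
of `π_Ω` to `X` and to `C_{5,∞}(X)` are proper maps, and `ker π_Ω ∩ C_{5,∞}(X) = {0}`. -/
theorem projOmega_proper_and_ker_cap_C5 {m k : ℕ} (X : Set (Em m))
    (hX : IsAlgSet X) (hpure : IsPureDim X k) (hub : ¬ Bornology.IsBounded X)
    (hC5alg : IsAlgSet (C5Inf X)) (hC5pure : IsPureDim (C5Inf X) k)
    (V₁ : Submodule ℂ (Em m)) (hV₁ : Module.finrank ℂ V₁ = k)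
    (A B : ℝ) (hA : 0 < A) (hB : 0 < B)
    (hXΩ : X ⊆ {z : Em m | ∃ z' ∈ V₁, ∃ z'' ∈ V₁ᗮ,
      z = z' + z'' ∧ ‖z''‖ ≤ A * (1 + ‖z'‖) ^ B})
    (hC5Ω : C5Inf X ⊆ {z : Em m | ∃ z' ∈ V₁, ∃ z'' ∈ V₁ᗮ,
      z = z' + z'' ∧ ‖z''‖ ≤ A * (1 + ‖z'‖) ^ B}) :
    (∀ K : Set V₁, IsCompact K → IsCompact {p ∈ X | V₁.orthogonalProjectionOnto p ∈ K}) ∧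
    (∀ K : Set V₁, IsCompact K → IsCompact {p ∈ C5Inf X | V₁.orthogonalProjectionOnto p ∈ K}) ∧
    (V₁ᗮ : Set (Em m)) ∩ C5Inf X = {0} := by
  have hXcl := isAlgSet_isClosed hX
  have hC5cl := isAlgSet_isClosed hC5alg
  refine ⟨fun K hK => proper_aux V₁ A B hA hB X hXcl hXΩ K hK,
    fun K hK => proper_aux V₁ A B hA hB _ hC5cl hC5Ω K hK, ?_⟩
  ext v
  constructor
  · rintro ⟨hv1, hv2⟩
    have hbd : ∀ n : ℕ, (n : ℝ) * ‖v‖ ≤ A := by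
      intro n
      have hmem : (n : ℂ) • v ∈ C5Inf X := C5Inf_smul_mem hv2 _
      obtain ⟨z', hz', z'', hz'', hzeq, hle⟩ := hC5Ω hmem
      have hvperp : (n : ℂ) • v ∈ V₁ᗮ := Submodule.smul_mem _ _ hv1
      have hz'perp : z' ∈ V₁ᗮ := by
        have : z' = (n : ℂ) • v - z'' := by rw [hzeq]; abel
        rw [this]; exact Submodule.sub_mem _ hvperp hz''
      have hz'0 : z' = 0 := by
        have := (Submodule.orthogonal_disjoint V₁).le_bot ⟨hz', hz'perp⟩
        simpa using this
      have hz''eq : z'' = (n : ℂ) • v := by rw [hzeq, hz'0, zero_add]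
      rw [hz''eq, hz'0] at hle
      have : ‖(n : ℂ) • v‖ = (n : ℝ) * ‖v‖ := by
        rw [norm_smul, Complex.norm_natCast]
      rw [this] at hle
      simpa using hle
    by_contra hne
    have hvne : v ≠ 0 := by simpa using hne
    have hvpos : 0 < ‖v‖ := norm_pos_iff.2 hvne
    obtain ⟨n, hn⟩ := exists_nat_gt (A / ‖v‖)
    have := hbd n
    have : (n : ℝ) ≤ A / ‖v‖ := (le_div_iff₀ hvpos).2 this
    linarith
  · rintro rfl
    exact ⟨Submodule.zero_mem _, zero_mem_C5Inf hub⟩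


end
end

section
/- Let X ⊂ ℂ^m be an unbounded pure k-dimensional complex algebraic set, let W ⊂ ℂ^m be an (m−k)-dimensional complex vector subspace with W ∩ C_{3,∞}(X) = {0}, write ℂ^m = V × W with V the orthogonal complement of W, and let π : ℂ^m → V be the orthogonal projection. If C_{4,∞}(X) ∩ W = {0}, then there exists a sufficiently large R > 0 such that Sing X \ B̄_R = Sing π \ B̄_R, where B̄_R is the closed ball of radius R centered at the origin of ℂ^m. -/
open Filter Topology Metric

noncomputable section

/-- Let `X ⊆ ℂ^m` be an unbounded pure `k`-dimensional complex algebraic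
set, `W` an `(m-k)`-dimensional complex subspace with `W ∩ C_{3,∞}(X) = {0}`, and
`π : ℂ^m → V = Wᗮ` the orthogonal projection.  If `C_{4,∞}(X) ∩ W = {0}`, then there is
`R > 0` with `Sing X \ B̄_R = Sing π \ B̄_R`, where `Sing π` is `Sing X` together with the
smooth points `p` of `X` at which `π` restricted to `T_p X` is not injective. -/
theorem singLocus_eq_singProj_outside_ball {m k : ℕ} (X : Set (Em m))
    (hX : IsAlgSet X) (hpure : IsPureDim X k) (hub : ¬ Bornology.IsBounded X)
    (W : Submodule ℂ (Em m)) (hW : Module.finrank ℂ W = m - k)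
    (htrans : (W : Set (Em m)) ∩ C3Inf X = {0})
    (hC4 : C4Inf X k ∩ (W : Set (Em m)) = {0}) :
    ∃ R : ℝ, 0 < R ∧
      singLocus X k \ Metric.closedBall 0 R =
        (singLocus X k ∪ {p ∈ X | p ∉ singLocus X k ∧
            ∃ v ∈ zTangent X p, v ≠ 0 ∧ Submodule.orthogonalProjectionOnto Wᗮ v = 0}) \
          Metric.closedBall 0 R := by
  classical
  have key : ∃ R : ℝ, ∀ p ∈ ({p ∈ X | p ∉ singLocus X k ∧
      ∃ v ∈ zTangent X p, v ≠ 0 ∧ Submodule.orthogonalProjectionOnto Wᗮ v = 0} : Set (Em m)), ‖p‖ ≤ R := by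
    by_contra h
    push_neg at h
    choose p hpB hpn using fun j : ℕ => h ((j : ℝ) + 1)
    have hpX : ∀ j, p j ∈ X ∧ p j ∉ singLocus X k ∧
        ∃ v ∈ zTangent X (p j), v ≠ 0 ∧ Submodule.orthogonalProjectionOnto Wᗮ v = 0 := fun j => hpB j
    choose v hv hrest using fun j => (hpX j).2.2
    have hvne : ∀ j, v j ≠ 0 := fun j => (hrest j).1
    have hvW : ∀ j, v j ∈ W := by
      intro j
      have h1 : v j ∈ Wᗮᗮ :=
        (Submodule.orthogonalProjectionOnto_eq_zero_iff (K := Wᗮ)).mp (hrest j).2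
      rwa [Submodule.orthogonal_orthogonal] at h1
    set w : ℕ → Em m := fun j => ((‖v j‖ : ℂ))⁻¹ • v j with hwdef
    have hwnorm : ∀ j, ‖w j‖ = 1 := by
      intro j
      have hne : ‖v j‖ ≠ 0 := norm_ne_zero_iff.mpr (hvne j)
      simp [hwdef, norm_smul, hne]
    have hws : ∀ j, w j ∈ sphere (0 : Em m) 1 := by
      intro j; simpa [mem_sphere_zero_iff_norm] using hwnorm j
    obtain ⟨u, huS, φ, hφ, hconv⟩ :=
      (isCompact_sphere (0 : Em m) 1).tendsto_subseq hws
    have huW : u ∈ W := by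
      have hclosed : IsClosed (W : Set (Em m)) := Submodule.closed_of_finiteDimensional W
      exact hclosed.mem_of_tendsto hconv
        (Filter.Eventually.of_forall fun j => W.smul_mem _ (hvW (φ j)))
    have hune : u ≠ 0 := by
      intro h0
      have h1 : ‖u‖ = 1 := mem_sphere_zero_iff_norm.mp huS
      rw [h0] at h1; simp at h1
    have huC4 : u ∈ C4Inf X k := by
      refine ⟨p ∘ φ, w ∘ φ, fun j => ⟨(hpX (φ j)).1, (hpX (φ j)).2.1⟩, ?_, ?_, hconv⟩
      · intro j
        exact (zTangent X (p (φ j))).smul_mem _ (hv (φ j))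
      · have hbase : Tendsto (fun j : ℕ => (j : ℝ) + 1) atTop atTop :=
          tendsto_atTop_add_const_right _ _ tendsto_natCast_atTop_atTop
        refine tendsto_atTop_mono (fun j => ?_) hbase
        have h1 : (j : ℝ) + 1 ≤ (φ j : ℝ) + 1 := by
          have : j ≤ φ j := hφ.le_apply
          exact_mod_cast add_le_add_left (Nat.cast_le.mpr this) 1
        exact h1.trans (hpn (φ j)).le
    have : u ∈ C4Inf X k ∩ (W : Set (Em m)) := ⟨huC4, huW⟩
    rw [hC4] at this
    exact hune this
  obtain ⟨R, hR⟩ := key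
  refine ⟨max R 1, lt_of_lt_of_le one_pos (le_max_right _ _), ?_⟩
  ext q
  simp only [Set.mem_diff, Set.mem_union]
  constructor
  · rintro ⟨hq, hn⟩; exact ⟨Or.inl hq, hn⟩
  · rintro ⟨hq | hq, hn⟩
    · exact ⟨hq, hn⟩
    · exfalso
      have h1 : ‖q‖ ≤ R := hR q hq
      have h2 : ¬ ‖q‖ ≤ max R 1 := by
        simpa [Metric.mem_closedBall, dist_eq_norm] using hn
      exact h2 (h1.trans (le_max_left _ _))

end
end

section
/- Let X ⊂ ℂ^m be an unbounded pure k-dimensional complex algebraic set, let W ⊂ ℂ^m be an (m−k)-dimensional complex vector subspace with W ∩ C_{3,∞}(X) = {0}, write ℂ^m = V × W with V the orthogonal complement of W and coordinates y = (y₁,…,y_{m−k}) on W, set Wⁱ := {(0,y) ∈ ℂ^m : y_i = 0} and let π_i : ℂ^m → ℂ^{k+1} be the projection π_i(x,y) = (x, y_i). If C_{5,∞}(X) ∩ Wⁱ = {0}, then there exists a sufficiently large R > 0 such that the restriction π_i : X \ B̄_R → π_i(X \ B̄_R) is a proper map, where B̄_R is the closed ball of radius R centered at the origin of ℂ^m.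 -/
open Filter Topology Metric

noncomputable section

set_option maxHeartbeats 1000000 in
/-- Let `X ⊆ ℂ^m` be an unbounded pure `k`-dimensional complex algebraic
set, `W` an `(m-k)`-dimensional complex subspace with `W ∩ C_{3,∞}(X) = {0}`, with
`V = Wᗮ`; fix orthogonal coordinates `e₁ : V ≃ ℂ^k`, `e₂ : W ≃ ℂ^{m-k}`, let
`Wⁱ = {(0, y) : yᵢ = 0}` and `πᵢ(x, y) = (x, yᵢ) : ℂ^m → ℂ^{k+1}`.
If `C_{5,∞}(X) ∩ Wⁱ = {0}`, then there is `R > 0` such that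
`πᵢ : X \ B̄_R → πᵢ(X \ B̄_R)` is a proper map (preimages in `X \ B̄_R` of compact subsets
of the image are compact). -/
theorem proj_i_proper_outside_ball {m k : ℕ} (X : Set (Em m))
    (hX : IsAlgSet X) (hpure : IsPureDim X k) (hub : ¬ Bornology.IsBounded X)
    (W : Submodule ℂ (Em m)) (hW : Module.finrank ℂ W = m - k)
    (htrans : (W : Set (Em m)) ∩ C3Inf X = {0})
    (e₁ : Wᗮ ≃ₗᵢ[ℂ] EuclideanSpace ℂ (Fin k))
    (e₂ : W ≃ₗᵢ[ℂ] EuclideanSpace ℂ (Fin (m - k)))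
    (i : Fin (m - k))
    (πi : Em m → Em (k + 1))
    (hπi : πi = fun z => (WithLp.toLp 2 (Fin.snoc (α := fun _ => ℂ)
      (WithLp.ofLp (e₁ (Submodule.orthogonalProjectionOnto Wᗮ z)))
      (e₂ (Submodule.orthogonalProjectionOnto W z) i)) : Em (k + 1)))
    (Wi : Set (Em m))
    (hWidef : Wi = {z : Em m | z ∈ W ∧ e₂ (Submodule.orthogonalProjectionOnto W z) i = 0})
    (hC5Wi : C5Inf X ∩ Wi = {0}) :
    ∃ R : ℝ, 0 < R ∧
      ∀ K : Set (Em (k + 1)), K ⊆ πi '' (X \ Metric.closedBall 0 R) → IsCompact K →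
        IsCompact ((X \ Metric.closedBall 0 R) ∩ πi ⁻¹' K) := by
  -- πi is a continuous linear map
  have hL : ∃ L : Em m →L[ℂ] Em (k+1), πi = ⇑L := by
    set A : Em m →L[ℂ] EuclideanSpace ℂ (Fin k) :=
      (e₁.toContinuousLinearEquiv : Wᗮ →L[ℂ] EuclideanSpace ℂ (Fin k)).comp
        (Submodule.orthogonalProjectionOnto Wᗮ) with hA
    set b : Em m →L[ℂ] ℂ :=
      (EuclideanSpace.proj i).comp
        (((e₂.toContinuousLinearEquiv : W →L[ℂ] EuclideanSpace ℂ (Fin (m-k)))).comp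
          (Submodule.orthogonalProjectionOnto W)) with hb
    refine ⟨((EuclideanSpace.equiv (Fin (k+1)) ℂ).symm : (Fin (k+1) → ℂ) →L[ℂ] Em (k+1)).comp
      (ContinuousLinearMap.pi (Fin.lastCases b (fun l => (EuclideanSpace.proj l).comp A))), ?_⟩
    rw [hπi]
    funext z
    ext j
    induction j using Fin.lastCases with
    | last => simp [hA, hb, Fin.snoc_last]
    | cast l => simp [hA, hb, Fin.snoc_castSucc]
  obtain ⟨L, hLeq⟩ := hL
  -- the key bi-Lipschitz-type estimate at infinity
  have key : ∃ R C : ℝ, 0 < R ∧ 0 < C ∧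
      ∀ p ∈ X, ∀ q ∈ X, R < ‖p‖ → R < ‖q‖ → ‖p - q‖ ≤ C * ‖πi p - πi q‖ := by
    by_contra hcon
    push_neg at hcon
    have h : ∀ j : ℕ, ∃ p ∈ X, ∃ q ∈ X, (j : ℝ) + 1 < ‖p‖ ∧ (j : ℝ) + 1 < ‖q‖ ∧
        ((j : ℝ) + 1) * ‖πi p - πi q‖ < ‖p - q‖ := by
      intro j
      exact hcon ((j : ℝ) + 1) ((j : ℝ) + 1) (by positivity) (by positivity)
    choose p hp q hq hnp hnq hlt using h
    have hne : ∀ j, p j - q j ≠ 0 := by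
      intro j hz
      have := hlt j
      rw [hz, norm_zero] at this
      nlinarith [norm_nonneg (πi (p j) - πi (q j)), this]
    set u : ℕ → Em m := fun j => (‖p j - q j‖⁻¹ : ℂ) • (p j - q j) with hu
    have husph : ∀ j, u j ∈ sphere (0 : Em m) 1 := by
      intro j
      rw [mem_sphere_zero_iff_norm]
      exact norm_smul_inv_norm (hne j)
    obtain ⟨v, hvsph, φ, hφ, hconv⟩ := (isCompact_sphere (0 : Em m) 1).tendsto_subseq husph
    have hvnorm : ‖v‖ = 1 := mem_sphere_zero_iff_norm.mp hvsph
    -- v ∈ C5Inf X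
    have hnorm_tendsto : ∀ (r : ℕ → Em m), (∀ j : ℕ, (j : ℝ) + 1 < ‖r j‖) →
        Tendsto (fun j => ‖r (φ j)‖) atTop atTop := by
      intro r hr
      apply tendsto_atTop_mono (f := fun j : ℕ => (j : ℝ))
      · intro j
        have h1 : (j : ℝ) ≤ (φ j : ℝ) := by exact_mod_cast hφ.le_apply
        have := hr (φ j)
        linarith
      · exact tendsto_natCast_atTop_atTop
    have hvC5 : v ∈ C5Inf X := by
      refine ⟨fun j => p (φ j), fun j => q (φ j), fun j => (‖p (φ j) - q (φ j)‖⁻¹ : ℂ),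
        fun j => hp _, fun j => hq _, hnorm_tendsto p hnp, hnorm_tendsto q hnq, ?_⟩
      exact hconv
    -- πi v = 0
    have hπiu : ∀ j, ‖πi (u j)‖ ≤ ((j : ℝ) + 1)⁻¹ := by
      intro j
      have hpos : (0 : ℝ) < ‖p j - q j‖ := norm_pos_iff.mpr (hne j)
      have : πi (u j) = (‖p j - q j‖⁻¹ : ℂ) • (πi (p j) - πi (q j)) := by
        rw [hLeq]; simp [hu, map_sub]
      rw [this, norm_smul]
      have h1 : ‖(‖p j - q j‖⁻¹ : ℂ)‖ = ‖p j - q j‖⁻¹ := by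
        simp [abs_of_nonneg (inv_nonneg.mpr (norm_nonneg _))]
      rw [h1]
      rw [inv_mul_le_iff₀ hpos, le_mul_inv_iff₀ (by positivity : (0:ℝ) < (j:ℝ)+1)]
      nlinarith [hlt j]
    have hπiv : πi v = 0 := by
      have hc : Tendsto (fun j => πi (u (φ j))) atTop (𝓝 (πi v)) := by
        rw [hLeq]
        exact (L.continuous.tendsto v).comp hconv
      have hz : Tendsto (fun j => πi (u (φ j))) atTop (𝓝 0) := by
        have hb : ∀ j : ℕ, ‖πi (u (φ j))‖ ≤ ((j : ℝ) + 1)⁻¹ := by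
          intro j
          refine le_trans (hπiu (φ j)) ?_
          have h1 : (j : ℝ) ≤ (φ j : ℝ) := by exact_mod_cast hφ.le_apply
          exact inv_anti₀ (by positivity) (by linarith)
        have ht : Tendsto (fun j : ℕ => ((j : ℝ) + 1)⁻¹) atTop (𝓝 0) :=
          tendsto_inv_atTop_zero.comp
            (tendsto_atTop_add_const_right atTop 1 tendsto_natCast_atTop_atTop)
        exact squeeze_zero_norm hb ht
      exact tendsto_nhds_unique hc hz
    -- hence v ∈ Wi
    have hvWi : v ∈ Wi := by
      rw [hπi] at hπiv
      have h1 : e₁ (Submodule.orthogonalProjectionOnto Wᗮ v) = 0 := by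
        ext l
        have := congrArg (fun w : Em (k + 1) => w (Fin.castSucc l)) hπiv
        simpa [Fin.snoc_castSucc] using this
      have h2 : e₂ (Submodule.orthogonalProjectionOnto W v) i = 0 := by
        have := congrArg (fun w : Em (k + 1) => w (Fin.last k)) hπiv
        simpa [Fin.snoc_last] using this
      have h3 : Submodule.orthogonalProjectionOnto Wᗮ v = 0 := by
        have := e₁.injective (by rw [h1, map_zero] : e₁ (Submodule.orthogonalProjectionOnto Wᗮ v) = e₁ 0)
        exact this
      have h4 : v ∈ Wᗮᗮ := Submodule.orthogonalProjectionOnto_eq_zero_iff.mp h3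
      rw [Submodule.orthogonal_orthogonal] at h4
      rw [hWidef]
      exact ⟨h4, h2⟩
    have : v = 0 := by
      have : v ∈ C5Inf X ∩ Wi := ⟨hvC5, hvWi⟩
      rw [hC5Wi] at this
      exact this
    rw [this, norm_zero] at hvnorm
    norm_num at hvnorm
  obtain ⟨R, C, hR, hC, hkey⟩ := key
  refine ⟨R, hR, fun K hK hKc => ?_⟩
  set S := ((X \ Metric.closedBall 0 R) ∩ πi ⁻¹' K) with hS
  have hnormS : ∀ z ∈ S, z ∈ X ∧ R < ‖z‖ ∧ πi z ∈ K := by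
    intro z hz
    obtain ⟨⟨hzX, hzB⟩, hzK⟩ := hz
    refine ⟨hzX, ?_, hzK⟩
    rw [Metric.mem_closedBall, dist_zero_right] at hzB
    exact lt_of_not_ge hzB
  -- S is bounded
  have hSb : Bornology.IsBounded S := by
    obtain ⟨M, hM⟩ := isBounded_iff_forall_norm_le.mp hKc.isBounded
    have h0 : ∃ z₀ ∈ X, R < ‖z₀‖ := by
      by_contra h
      push_neg at h
      exact hub (isBounded_iff_forall_norm_le.mpr ⟨R, fun x hx => (h x hx)⟩)
    obtain ⟨z₀, hz₀X, hz₀⟩ := h0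
    rw [isBounded_iff_forall_norm_le]
    refine ⟨‖z₀‖ + C * (M + ‖πi z₀‖), fun z hz => ?_⟩
    obtain ⟨hzX, hzn, hzK⟩ := hnormS z hz
    have h1 : ‖z - z₀‖ ≤ C * ‖πi z - πi z₀‖ := hkey z hzX z₀ hz₀X hzn hz₀
    have h2 : ‖πi z - πi z₀‖ ≤ M + ‖πi z₀‖ :=
      le_trans (norm_sub_le _ _) (by gcongr; exact hM _ hzK)
    calc ‖z‖ = ‖z₀ + (z - z₀)‖ := by congr 1; abel
    _ ≤ ‖z₀‖ + ‖z - z₀‖ := norm_add_le _ _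
    _ ≤ ‖z₀‖ + C * (M + ‖πi z₀‖) := by nlinarith
  -- S is closed
  have hSc : IsClosed S := by
    apply IsSeqClosed.isClosed
    intro zs z hmem hlim
    have hπlim : Tendsto (fun n => πi (zs n)) atTop (𝓝 (πi z)) := by
      rw [hLeq]
      exact (L.continuous.tendsto z).comp hlim
    have hπzK : πi z ∈ K :=
      hKc.isClosed.mem_of_tendsto hπlim (Eventually.of_forall fun n => (hnormS _ (hmem n)).2.2)
    obtain ⟨z', hz'mem, hz'eq⟩ := hK hπzK
    have hz'n : R < ‖z'‖ := by
      have := hz'mem.2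
      rw [Metric.mem_closedBall, dist_zero_right] at this
      exact lt_of_not_ge this
    have hlim' : Tendsto zs atTop (𝓝 z') := by
      rw [tendsto_iff_norm_sub_tendsto_zero]
      have hb : ∀ n, ‖‖zs n - z'‖‖ ≤ C * ‖πi (zs n) - πi z'‖ := by
        intro n
        rw [norm_norm, norm_sub_rev, norm_sub_rev (πi (zs n)) (πi z')]
        exact hkey z' hz'mem.1 (zs n) (hnormS _ (hmem n)).1 hz'n (hnormS _ (hmem n)).2.1
      have ht : Tendsto (fun n => C * ‖πi (zs n) - πi z'‖) atTop (𝓝 0) := by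
        have h2 : Tendsto (fun n => πi (zs n) - πi z') atTop (𝓝 (πi z - πi z')) :=
          hπlim.sub tendsto_const_nhds
        have h3 : πi z - πi z' = 0 := by rw [hz'eq, sub_self]
        rw [h3] at h2
        simpa using (h2.norm.const_mul C)
      exact squeeze_zero_norm hb ht
    have heq : z = z' := tendsto_nhds_unique hlim hlim'
    subst heq
    exact ⟨hz'mem, hπzK⟩
  exact Metric.isCompact_of_isClosed_isBounded hSc hSb


end
end
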